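/- For every ã ≥ −k/σ, one has (ã + k/σ)² ρ*(ã) ≤ (a* + k/σ)² ρ(a*); that is, a* is a global maximizer of θ ↦ (θ + k/σ)² ρ*(θ) on [−k/σ, ∞), and the maximal value equals (a* + k/σ)² ρ(a*) since ρ*(a*) = ρ(a*). -/

import Mathlib

open Real MeasureTheory

/-- The standard normal density. -/
noncomputable def gaussPdf (x : ℝ) : ℝ :=
  (Real.sqrt (2 * Real.pi))⁻¹ * Real.exp (-(x ^ 2) / 2)

/-- ρ(a) = ∫ (1/(exp(2ay)+1))² φ(y−a) dy. -/
noncomputable def ρ (a : ℝ) : ℝ :=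
  ∫ y : ℝ, (1 / (Real.exp (2 * a * y) + 1)) ^ 2 * gaussPdf (y - a)

/-- ρ*(θ) = ∫ (1/(exp(2a*y)+1))² φ(y−θ) dy, the logistic weight frozen at a*. -/
noncomputable def ρstar (astar θ : ℝ) : ℝ :=
  ∫ y : ℝ, (1 / (Real.exp (2 * astar * y) + 1)) ^ 2 * gaussPdf (y - θ)

open Filter Topology Set Metric

noncomputable def lg (x : ℝ) : ℝ := (1 / (Real.exp x + 1)) ^ 2
noncomputable def pe (x : ℝ) : ℝ := Real.exp x / (Real.exp x + 1)





lemma exp_add_one_pos (x : ℝ) : 0 < Real.exp x + 1 := by positivity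

lemma lg_pos (x : ℝ) : 0 < lg x := by
  unfold lg; positivity

lemma lg_le_one (x : ℝ) : lg x ≤ 1 := by
  unfold lg
  have h1 : (1:ℝ) ≤ Real.exp x + 1 := by nlinarith [Real.exp_pos x]
  have : 1 / (Real.exp x + 1) ≤ 1 := by
    rw [div_le_one (exp_add_one_pos x)]; exact h1
  nlinarith [le_of_lt (by positivity : (0:ℝ) < 1 / (Real.exp x + 1))]

lemma pe_pos (x : ℝ) : 0 < pe x := by unfold pe; positivity

lemma pe_lt_one (x : ℝ) : pe x < 1 := by
  unfold pe
  rw [div_lt_one (exp_add_one_pos x)]; linarith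

lemma pe_le_one (x : ℝ) : pe x ≤ 1 := (pe_lt_one x).le

lemma pe_monotone : Monotone pe := by
  intro x y hxy
  unfold pe
  rw [div_le_div_iff₀ (exp_add_one_pos x) (exp_add_one_pos y)]
  have := Real.exp_le_exp.2 hxy
  nlinarith [Real.exp_pos x, Real.exp_pos y]

lemma hasDerivAt_lg (x : ℝ) : HasDerivAt lg (-2 * pe x * lg x) x := by
  have h0 : Real.exp x + 1 ≠ 0 := (exp_add_one_pos x).ne'
  have h : HasDerivAt (fun x => (1 / (Real.exp x + 1)) ^ 2)
      (2 * (1 / (Real.exp x + 1)) ^ 1 * (-(Real.exp x) / (Real.exp x + 1) ^ 2)) x := by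
    have h1 : HasDerivAt (fun x => Real.exp x + 1) (Real.exp x) x :=
      (Real.hasDerivAt_exp x).add_const 1
    have h2 : HasDerivAt (fun x => 1 / (Real.exp x + 1)) (-(Real.exp x) / (Real.exp x + 1) ^ 2) x := by
      rw [show (fun x => 1 / (Real.exp x + 1)) = fun x => (Real.exp x + 1)⁻¹ from by
        funext y; rw [one_div]]
      exact h1.inv h0
    refine (h2.fun_pow 2).congr_deriv ?_
    norm_num
  convert h using 1
  · rfl
  unfold pe lg
  field_simp

lemma hasDerivAt_pe (x : ℝ) : HasDerivAt pe (pe x * (1 - pe x)) x := by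
  have h0 : Real.exp x + 1 ≠ 0 := (exp_add_one_pos x).ne'
  have h1 : HasDerivAt (fun x => Real.exp x + 1) (Real.exp x) x :=
    (Real.hasDerivAt_exp x).add_const 1
  have h : HasDerivAt (fun x => Real.exp x / (Real.exp x + 1))
      ((Real.exp x * (Real.exp x + 1) - Real.exp x * Real.exp x) / (Real.exp x + 1) ^ 2) x :=
    (Real.hasDerivAt_exp x).div h1 h0
  convert h using 1
  · rfl
  unfold pe
  field_simp

@[fun_prop] lemma continuous_lg : Continuous lg := by
  unfold lg; fun_prop (disch := intro x; positivity)

@[fun_prop] lemma continuous_pe : Continuous pe := by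
  unfold pe; fun_prop (disch := intro x; positivity)

lemma gaussPdf_pos (x : ℝ) : 0 < gaussPdf x := by
  unfold gaussPdf
  have : 0 < Real.sqrt (2 * Real.pi) := Real.sqrt_pos.2 (by positivity)
  positivity

@[fun_prop] lemma continuous_gaussPdf : Continuous gaussPdf := by
  unfold gaussPdf; fun_prop

lemma gaussPdf_eq (x : ℝ) : gaussPdf x = (Real.sqrt (2 * Real.pi))⁻¹ * Real.exp (-(2⁻¹) * x ^ 2) := by
  unfold gaussPdf; ring_nf

lemma integrable_gaussPdf : Integrable gaussPdf := by
  simp only [funext gaussPdf_eq]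
  exact (integrable_exp_neg_mul_sq (by norm_num : (0:ℝ) < 2⁻¹)).const_mul _

lemma integrable_mul_gaussPdf : Integrable (fun x => x * gaussPdf x) := by
  have : (fun x => x * gaussPdf x) =
      fun x => (Real.sqrt (2 * Real.pi))⁻¹ * (x * Real.exp (-(2⁻¹) * x ^ 2)) := by
    funext x; rw [gaussPdf_eq]; ring
  rw [this]
  exact (integrable_mul_exp_neg_mul_sq (by norm_num : (0:ℝ) < 2⁻¹)).const_mul _

lemma integrable_abs_mul_gaussPdf : Integrable (fun x => |x| * gaussPdf x) := by
  have := integrable_mul_gaussPdf.abs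
  refine this.congr ?_
  filter_upwards with x
  rw [abs_mul, abs_of_nonneg (gaussPdf_pos x).le]

lemma gaussPdf_tendsto_atTop : Tendsto gaussPdf atTop (𝓝 0) := by
  have h : Tendsto (fun x : ℝ => -(x ^ 2) / 2) atTop atBot := by
    apply Tendsto.atBot_div_const (by norm_num)
    exact tendsto_neg_atBot_iff.mpr (tendsto_pow_atTop (two_ne_zero))
  have := (Real.tendsto_exp_atBot).comp h
  have h2 : Tendsto (fun x => (Real.sqrt (2 * Real.pi))⁻¹ * Real.exp (-(x ^ 2) / 2)) atTop
      (𝓝 ((Real.sqrt (2 * Real.pi))⁻¹ * 0)) := this.const_mul _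
  have e : (Real.sqrt (2 * Real.pi))⁻¹ * 0 = 0 := by ring
  rw [e] at h2
  exact h2.congr fun x => by rw [gaussPdf]

lemma gaussPdf_even (x : ℝ) : gaussPdf (-x) = gaussPdf x := by
  unfold gaussPdf; ring_nf

lemma gaussPdf_tendsto_atBot : Tendsto gaussPdf atBot (𝓝 0) := by
  have := gaussPdf_tendsto_atTop.comp (tendsto_neg_atBot_atTop)
  refine this.congr fun x => ?_
  simp [Function.comp, gaussPdf_even]



section Helpers

lemma my_integral_comp_neg (f : ℝ → ℝ) : ∫ x, f (-x) = ∫ x, f x := by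
  have A : MeasurableEmbedding fun x : ℝ => -x :=
    (Homeomorph.neg ℝ).measurableEmbedding
  rw [← A.integral_map, Measure.map_neg_eq_self (volume : Measure ℝ)]

lemma integral_eq_zero_of_odd (f : ℝ → ℝ) (h : ∀ x, f (-x) = -f x) : ∫ x, f x = 0 := by
  have h1 : ∫ x, f (-x) = ∫ x, f x := my_integral_comp_neg f
  have h2 : ∫ x, f (-x) = ∫ x, -f x := by simp_rw [h]
  rw [integral_neg] at h2
  linarith [h1, h2]

lemma my_integral_deriv_eq_zero (f f' : ℝ → ℝ) (hd : ∀ x, HasDerivAt f (f' x) x)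
    (hi : Integrable f') (h1 : Tendsto f atTop (𝓝 0)) (h2 : Tendsto f atBot (𝓝 0)) :
    ∫ x, f' x = 0 := by
  have lim1 : Tendsto (fun R : ℝ => ∫ x in (-R)..R, f' x) atTop (𝓝 (∫ x, f' x)) :=
    intervalIntegral_tendsto_integral hi tendsto_neg_atTop_atBot tendsto_id
  have heq : ∀ R : ℝ, (∫ x in (-R)..R, f' x) = f R - f (-R) := fun R =>
    intervalIntegral.integral_eq_sub_of_hasDerivAt (fun x _ => hd x)
      hi.intervalIntegrable
  have lim2 : Tendsto (fun R : ℝ => f R - f (-R)) atTop (𝓝 (0 - 0)) :=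
    h1.sub (h2.comp tendsto_neg_atTop_atBot)
  rw [show (0:ℝ) - 0 = 0 by ring] at lim2
  have := lim1.congr (fun R => heq R)
  exact tendsto_nhds_unique this lim2

lemma chebyshev_assoc (ψ g : ℝ → ℝ) (hψ : ∀ z, 0 ≤ ψ z) (hg : Monotone g)
    (i1 : Integrable ψ) (i2 : Integrable (fun z => g z * ψ z))
    (i3 : Integrable (fun z => z * ψ z)) (i4 : Integrable (fun z => g z * (z * ψ z))) :
    (∫ z, g z * ψ z) * ∫ z, z * ψ z ≤ (∫ z, g z * (z * ψ z)) * ∫ z, ψ z := by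
  set P := ∫ z, ψ z
  set Q := ∫ z, g z * ψ z
  set S := ∫ z, z * ψ z
  set T := ∫ z, g z * (z * ψ z)
  have key : 0 ≤ ∫ p : ℝ × ℝ, (g p.1 - g p.2) * (p.1 - p.2) * (ψ p.1 * ψ p.2)
      ∂((volume : Measure ℝ).prod (volume : Measure ℝ)) := by
    apply integral_nonneg
    rintro ⟨x, y⟩
    have h1 : 0 ≤ (g x - g y) * (x - y) := by
      rcases le_total x y with h | h
      · have := hg h; nlinarith
      · have := hg h; nlinarith
    exact mul_nonneg h1 (mul_nonneg (hψ x) (hψ y))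
  have expand : (∫ p : ℝ × ℝ, (g p.1 - g p.2) * (p.1 - p.2) * (ψ p.1 * ψ p.2)
      ∂((volume : Measure ℝ).prod (volume : Measure ℝ))) = T * P + P * T - Q * S - S * Q := by
    have e : ∀ p : ℝ × ℝ, (g p.1 - g p.2) * (p.1 - p.2) * (ψ p.1 * ψ p.2)
        = (g p.1 * (p.1 * ψ p.1)) * ψ p.2 + ψ p.1 * (g p.2 * (p.2 * ψ p.2))
          - (g p.1 * ψ p.1) * (p.2 * ψ p.2) - (p.1 * ψ p.1) * (g p.2 * ψ p.2) := by
      intro p; ring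
    rw [show (fun p : ℝ × ℝ => (g p.1 - g p.2) * (p.1 - p.2) * (ψ p.1 * ψ p.2))
        = fun p : ℝ × ℝ => (g p.1 * (p.1 * ψ p.1)) * ψ p.2 + ψ p.1 * (g p.2 * (p.2 * ψ p.2))
          - (g p.1 * ψ p.1) * (p.2 * ψ p.2) - (p.1 * ψ p.1) * (g p.2 * ψ p.2)
        from funext e]
    have I1 : Integrable (fun p : ℝ × ℝ => (g p.1 * (p.1 * ψ p.1)) * ψ p.2)
        ((volume : Measure ℝ).prod volume) := i4.mul_prod i1
    have I2 : Integrable (fun p : ℝ × ℝ => ψ p.1 * (g p.2 * (p.2 * ψ p.2)))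
        ((volume : Measure ℝ).prod volume) := i1.mul_prod i4
    have I3 : Integrable (fun p : ℝ × ℝ => (g p.1 * ψ p.1) * (p.2 * ψ p.2))
        ((volume : Measure ℝ).prod volume) := i2.mul_prod i3
    have I4 : Integrable (fun p : ℝ × ℝ => (p.1 * ψ p.1) * (g p.2 * ψ p.2))
        ((volume : Measure ℝ).prod volume) := i3.mul_prod i2
    have J1 : Integrable (fun p : ℝ × ℝ => (g p.1 * (p.1 * ψ p.1)) * ψ p.2
        + ψ p.1 * (g p.2 * (p.2 * ψ p.2))) ((volume : Measure ℝ).prod volume) := I1.add I2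
    have J2 : Integrable (fun p : ℝ × ℝ => (g p.1 * (p.1 * ψ p.1)) * ψ p.2
        + ψ p.1 * (g p.2 * (p.2 * ψ p.2)) - (g p.1 * ψ p.1) * (p.2 * ψ p.2))
        ((volume : Measure ℝ).prod volume) := J1.sub I3
    rw [integral_sub J2 I4, integral_sub J1 I3, integral_add I1 I2,
      integral_prod_mul (fun x => g x * (x * ψ x)) ψ,
      integral_prod_mul ψ (fun x => g x * (x * ψ x)),
      integral_prod_mul (fun x => g x * ψ x) (fun x => x * ψ x),
      integral_prod_mul (fun x => x * ψ x) (fun x => g x * ψ x)]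
  nlinarith [key, expand]

end Helpers

noncomputable def P1 (a θ : ℝ) : ℝ := ∫ z, lg (2 * a * (z + θ)) * gaussPdf z
noncomputable def D1 (a θ : ℝ) : ℝ :=
  ∫ z, (-4 * a) * (pe (2 * a * (z + θ)) * lg (2 * a * (z + θ))) * gaussPdf z
noncomputable def D2 (a θ : ℝ) : ℝ :=
  ∫ z, (16 * a ^ 2 * pe (2 * a * (z + θ)) ^ 2
    - 8 * a ^ 2 * (pe (2 * a * (z + θ)) * (1 - pe (2 * a * (z + θ)))))
    * lg (2 * a * (z + θ)) * gaussPdf z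

lemma integrable_bdd_mul_gaussPdf {g : ℝ → ℝ} (C : ℝ)
    (hm : AEStronglyMeasurable g volume) (hb : ∀ z, |g z| ≤ C) :
    Integrable (fun z => g z * gaussPdf z) := by
  refine Integrable.mono' (integrable_gaussPdf.const_mul C)
    (hm.mul continuous_gaussPdf.aestronglyMeasurable) ?_
  filter_upwards with z
  rw [norm_mul, Real.norm_eq_abs, Real.norm_eq_abs, abs_of_nonneg (gaussPdf_pos z).le]
  exact mul_le_mul_of_nonneg_right (hb z) (gaussPdf_pos z).le

lemma integrable_bdd_mul_abs_gaussPdf {g : ℝ → ℝ} (C : ℝ)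
    (hm : AEStronglyMeasurable g volume) (hb : ∀ z, |g z| ≤ C) :
    Integrable (fun z => g z * (z * gaussPdf z)) := by
  refine Integrable.mono' (integrable_abs_mul_gaussPdf.const_mul C)
    (hm.mul (continuous_id.mul continuous_gaussPdf).aestronglyMeasurable) ?_
  filter_upwards with z
  rw [norm_mul, norm_mul, Real.norm_eq_abs, Real.norm_eq_abs, Real.norm_eq_abs,
    abs_of_nonneg (gaussPdf_pos z).le]
  have : |g z| * (|z| * gaussPdf z) ≤ C * (|z| * gaussPdf z) :=
    mul_le_mul_of_nonneg_right (hb z) (mul_nonneg (abs_nonneg z) (gaussPdf_pos z).le)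
  linarith [this]

lemma rhostar_eq_P1 (a θ : ℝ) : ρstar a θ = P1 a θ := by
  have h := integral_add_right_eq_self (μ := volume)
    (fun y => (1 / (Real.exp (2 * a * y) + 1)) ^ 2 * gaussPdf (y - θ)) θ
  rw [ρstar, ← h, P1]
  congr 1
  funext z
  rw [add_sub_cancel_right]
  rfl

lemma rho_eq (t : ℝ) : ρ t = ∫ z, lg (2 * t * (z + t)) * gaussPdf z := by
  have h := integral_add_right_eq_self (μ := volume)
    (fun y => (1 / (Real.exp (2 * t * y) + 1)) ^ 2 * gaussPdf (y - t)) t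
  rw [ρ, ← h]
  congr 1
  funext z
  rw [add_sub_cancel_right]
  rfl

lemma abs_le_of_ball {x t : ℝ} (hx : x ∈ ball t 1) : |x| ≤ |t| + 1 := by
  have : |x - t| < 1 := by simpa [Real.dist_eq] using hx
  calc |x| = |x - t + t| := by ring_nf
    _ ≤ |x - t| + |t| := abs_add_le _ _
    _ ≤ |t| + 1 := by linarith

lemma hasDerivAt_P1 (a θ : ℝ) : HasDerivAt (P1 a) (D1 a θ) θ := by
  have key := hasDerivAt_integral_of_dominated_loc_of_deriv_le
    (F := fun x z => lg (2 * a * (z + x)) * gaussPdf z)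
    (F' := fun x z => (-4 * a) * (pe (2 * a * (z + x)) * lg (2 * a * (z + x))) * gaussPdf z)
    (x₀ := θ) (s := ball θ 1) (bound := fun z => (4 * |a|) * gaussPdf z)
    (ball_mem_nhds _ one_pos)
    (Eventually.of_forall fun x =>
      ((by fun_prop : Continuous fun z : ℝ => lg (2 * a * (z + x)) * gaussPdf z)).aestronglyMeasurable)
    (integrable_bdd_mul_gaussPdf 1
      ((by fun_prop : Continuous fun z : ℝ => lg (2 * a * (z + θ))).aestronglyMeasurable)
      (fun z => by rw [abs_of_nonneg (lg_pos _).le]; exact lg_le_one _))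
    ((by fun_prop : Continuous fun z : ℝ => (-4 * a) * (pe (2 * a * (z + θ)) * lg (2 * a * (z + θ))) * gaussPdf z).aestronglyMeasurable)
    (Eventually.of_forall fun z => fun x _ => by
      rw [norm_mul, norm_mul, Real.norm_eq_abs, Real.norm_eq_abs, Real.norm_eq_abs,
        abs_of_nonneg (gaussPdf_pos z).le]
      have h1 : |pe (2 * a * (z + x)) * lg (2 * a * (z + x))| ≤ 1 := by
        rw [abs_of_nonneg (mul_nonneg (pe_pos _).le (lg_pos _).le)]
        exact mul_le_one₀ (pe_le_one _) (lg_pos _).le (lg_le_one _)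
      have h2 : |(-4 : ℝ) * a| = 4 * |a| := by rw [abs_mul]; norm_num
      calc |(-4 : ℝ) * a| * |pe (2 * a * (z + x)) * lg (2 * a * (z + x))| * gaussPdf z
          ≤ |(-4 : ℝ) * a| * 1 * gaussPdf z := by
            apply mul_le_mul_of_nonneg_right _ (gaussPdf_pos z).le
            exact mul_le_mul_of_nonneg_left h1 (abs_nonneg _)
        _ = 4 * |a| * gaussPdf z := by rw [h2, mul_one])
    ((integrable_gaussPdf.const_mul _))
    (Eventually.of_forall fun z => fun x _ => by
      have hin : HasDerivAt (fun x => 2 * a * (z + x)) (2 * a) x := by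
        simpa using ((hasDerivAt_id x).const_add z).const_mul (2 * a)
      have h := ((hasDerivAt_lg (2 * a * (z + x))).comp (h₂ := lg) x hin).mul_const (gaussPdf z)
      refine h.congr_deriv ?_
      ring)
  exact key.2

lemma hasDerivAt_D1 (a θ : ℝ) : HasDerivAt (D1 a) (D2 a θ) θ := by
  have key := hasDerivAt_integral_of_dominated_loc_of_deriv_le
    (F := fun x z => (-4 * a) * (pe (2 * a * (z + x)) * lg (2 * a * (z + x))) * gaussPdf z)
    (F' := fun x z => (16 * a ^ 2 * pe (2 * a * (z + x)) ^ 2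
      - 8 * a ^ 2 * (pe (2 * a * (z + x)) * (1 - pe (2 * a * (z + x)))))
      * lg (2 * a * (z + x)) * gaussPdf z)
    (x₀ := θ) (s := ball θ 1) (bound := fun z => (24 * a ^ 2) * gaussPdf z)
    (ball_mem_nhds _ one_pos)
    (Eventually.of_forall fun x =>
      ((by fun_prop : Continuous fun z : ℝ => (-4 * a) * (pe (2 * a * (z + x)) * lg (2 * a * (z + x))) * gaussPdf z)).aestronglyMeasurable)
    (integrable_bdd_mul_gaussPdf (4 * |a|)
      ((by fun_prop : Continuous fun z : ℝ => (-4 : ℝ) * a * (pe (2 * a * (z + θ)) * lg (2 * a * (z + θ)))).aestronglyMeasurable)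
      (fun z => by
        rw [abs_mul]
        have h1 : |pe (2 * a * (z + θ)) * lg (2 * a * (z + θ))| ≤ 1 := by
          rw [abs_of_nonneg (mul_nonneg (pe_pos _).le (lg_pos _).le)]
          exact mul_le_one₀ (pe_le_one _) (lg_pos _).le (lg_le_one _)
        have h2 : |(-4 : ℝ) * a| = 4 * |a| := by rw [abs_mul]; norm_num
        calc |(-4:ℝ) * a| * |pe (2 * a * (z + θ)) * lg (2 * a * (z + θ))|
            ≤ |(-4:ℝ) * a| * 1 := mul_le_mul_of_nonneg_left h1 (abs_nonneg _)
          _ = 4 * |a| := by rw [h2, mul_one]))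
    ((by fun_prop : Continuous fun z : ℝ => (16 * a ^ 2 * pe (2 * a * (z + θ)) ^ 2
      - 8 * a ^ 2 * (pe (2 * a * (z + θ)) * (1 - pe (2 * a * (z + θ)))))
      * lg (2 * a * (z + θ)) * gaussPdf z).aestronglyMeasurable)
    (Eventually.of_forall fun z => fun x _ => by
      rw [norm_mul, norm_mul, Real.norm_eq_abs, Real.norm_eq_abs, Real.norm_eq_abs,
        abs_of_nonneg (gaussPdf_pos z).le]
      set u := pe (2 * a * (z + x))
      have hu0 : 0 < u := pe_pos _
      have hu1 : u ≤ 1 := pe_le_one _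
      have h1 : |16 * a ^ 2 * u ^ 2 - 8 * a ^ 2 * (u * (1 - u))| ≤ 24 * a ^ 2 := by
        have hA : 0 ≤ a ^ 2 * (u * (1 - u)) :=
          mul_nonneg (sq_nonneg a) (mul_nonneg hu0.le (by linarith))
        have hB : a ^ 2 * u ^ 2 ≤ a ^ 2 := by nlinarith [sq_nonneg a, sq_nonneg (a * u)]
        have hC : a ^ 2 * (u * (1 - u)) ≤ a ^ 2 := by nlinarith [sq_nonneg a, sq_nonneg (a * u)]
        have hD : 0 ≤ a ^ 2 * u ^ 2 := by positivity
        rw [abs_le]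
        constructor <;> nlinarith
      have h2 : |lg (2 * a * (z + x))| ≤ 1 := by
        rw [abs_of_nonneg (lg_pos _).le]; exact lg_le_one _
      calc |16 * a ^ 2 * u ^ 2 - 8 * a ^ 2 * (u * (1 - u))| * |lg (2 * a * (z + x))| * gaussPdf z
          ≤ (24 * a ^ 2) * 1 * gaussPdf z := by
            apply mul_le_mul_of_nonneg_right _ (gaussPdf_pos z).le
            exact mul_le_mul h1 h2 (abs_nonneg _) (by positivity)
        _ = (24 * a ^ 2) * gaussPdf z := by ring)
    ((integrable_gaussPdf.const_mul _))
    (Eventually.of_forall fun z => fun x _ => by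
      have hin : HasDerivAt (fun x => 2 * a * (z + x)) (2 * a) x := by
        simpa using ((hasDerivAt_id x).const_add z).const_mul (2 * a)
      have hpe : HasDerivAt (fun x => pe (2 * a * (z + x)))
          (pe (2 * a * (z + x)) * (1 - pe (2 * a * (z + x))) * (2 * a)) x :=
        (hasDerivAt_pe (2 * a * (z + x))).comp (h₂ := pe) x hin
      have hlg : HasDerivAt (fun x => lg (2 * a * (z + x)))
          (-2 * pe (2 * a * (z + x)) * lg (2 * a * (z + x)) * (2 * a)) x :=
        (hasDerivAt_lg (2 * a * (z + x))).comp (h₂ := lg) x hin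
      have h := (((hpe.fun_mul hlg).const_mul ((-4 : ℝ) * a)).mul_const (gaussPdf z))
      refine h.congr_deriv ?_
      ring)
  exact key.2

noncomputable def Dρ (t : ℝ) : ℝ :=
  ∫ z, (2 * z + 4 * t) * (-2 * (pe (2 * t * (z + t)) * lg (2 * t * (z + t)))) * gaussPdf z

lemma hasDerivAt_rho (t : ℝ) : HasDerivAt ρ (Dρ t) t := by
  have key := hasDerivAt_integral_of_dominated_loc_of_deriv_le
    (F := fun x z => lg (2 * x * (z + x)) * gaussPdf z)
    (F' := fun x z => (2 * z + 4 * x) * (-2 * (pe (2 * x * (z + x)) * lg (2 * x * (z + x)))) * gaussPdf z)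
    (x₀ := t) (s := ball t 1) (bound := fun z => 4 * (|z| * gaussPdf z) + (8 * |t| + 8) * gaussPdf z)
    (ball_mem_nhds _ one_pos)
    (Eventually.of_forall fun x =>
      ((by fun_prop : Continuous fun z : ℝ => lg (2 * x * (z + x)) * gaussPdf z)).aestronglyMeasurable)
    (integrable_bdd_mul_gaussPdf 1
      ((by fun_prop : Continuous fun z : ℝ => lg (2 * t * (z + t))).aestronglyMeasurable)
      (fun z => by rw [abs_of_nonneg (lg_pos _).le]; exact lg_le_one _))
    ((by fun_prop : Continuous fun z : ℝ => (2 * z + 4 * t) * (-2 * (pe (2 * t * (z + t)) * lg (2 * t * (z + t)))) * gaussPdf z).aestronglyMeasurable)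
    (Eventually.of_forall fun z => fun x hx => by
      rw [norm_mul, norm_mul, Real.norm_eq_abs, Real.norm_eq_abs, Real.norm_eq_abs,
        abs_of_nonneg (gaussPdf_pos z).le]
      have hxb : |x| ≤ |t| + 1 := abs_le_of_ball hx
      have h1 : |2 * z + 4 * x| ≤ 2 * |z| + (4 * |t| + 4) := by
        calc |2 * z + 4 * x| ≤ |2 * z| + |4 * x| := abs_add_le _ _
          _ = 2 * |z| + 4 * |x| := by rw [abs_mul, abs_mul]; norm_num
          _ ≤ 2 * |z| + (4 * |t| + 4) := by linarith
      have h2 : |(-2 : ℝ) * (pe (2 * x * (z + x)) * lg (2 * x * (z + x)))| ≤ 2 := by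
        rw [abs_mul]
        have : |pe (2 * x * (z + x)) * lg (2 * x * (z + x))| ≤ 1 := by
          rw [abs_of_nonneg (mul_nonneg (pe_pos _).le (lg_pos _).le)]
          exact mul_le_one₀ (pe_le_one _) (lg_pos _).le (lg_le_one _)
        calc |(-2:ℝ)| * |pe (2 * x * (z + x)) * lg (2 * x * (z + x))| ≤ |(-2:ℝ)| * 1 :=
            mul_le_mul_of_nonneg_left this (abs_nonneg _)
          _ = 2 := by norm_num
      calc |2 * z + 4 * x| * |(-2:ℝ) * (pe (2 * x * (z + x)) * lg (2 * x * (z + x)))| * gaussPdf z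
          ≤ (2 * |z| + (4 * |t| + 4)) * 2 * gaussPdf z := by
            apply mul_le_mul_of_nonneg_right _ (gaussPdf_pos z).le
            exact mul_le_mul h1 h2 (abs_nonneg _) (by positivity)
        _ = 4 * (|z| * gaussPdf z) + (8 * |t| + 8) * gaussPdf z := by ring)
    (((integrable_abs_mul_gaussPdf.const_mul 4).add (integrable_gaussPdf.const_mul (8 * |t| + 8))).congr
      (by filter_upwards with z; simp only [Pi.add_apply]; try ring))
    (Eventually.of_forall fun z => fun x _ => by
      have hin : HasDerivAt (fun x => 2 * x * (z + x)) (2 * z + 4 * x) x := by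
        have h := ((hasDerivAt_id x).mul ((hasDerivAt_id x).const_add z)).const_mul (2 : ℝ)
        have h2 : HasDerivAt (fun x => 2 * (x * (z + x))) (2 * (1 * (z + x) + x * 1)) x := by
          simpa using h
        have h3 : (fun x : ℝ => 2 * (x * (z + x))) = fun x : ℝ => 2 * x * (z + x) := by
          funext y; ring
        rw [h3] at h2
        convert h2 using 1
        ring
      have h := ((hasDerivAt_lg (2 * x * (z + x))).comp (h₂ := lg) x hin).mul_const (gaussPdf z)
      refine h.congr_deriv ?_
      ring)
  have hfun : ρ = fun x => ∫ z, lg (2 * x * (z + x)) * gaussPdf z := funext rho_eq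
  rw [hfun]
  exact key.2

lemma pe_lg_neg (x : ℝ) : pe (-x) * lg (-x) = Real.exp x * (pe x * lg x) := by
  unfold pe lg
  rw [Real.exp_neg]
  have h1 : Real.exp x + 1 ≠ 0 := by positivity
  have h2 : (Real.exp x)⁻¹ + 1 ≠ 0 := by positivity
  field_simp
  ring

lemma gaussPdf_shift (y t : ℝ) : gaussPdf (y + t) = Real.exp (-(2 * t * y)) * gaussPdf (y - t) := by
  unfold gaussPdf
  rw [show (-((y + t) ^ 2) / 2 : ℝ) = -(2 * t * y) + -((y - t) ^ 2) / 2 by ring, Real.exp_add]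
  ring

lemma odd_term_zero (t : ℝ) :
    ∫ z, (z + t) * (-2 * (pe (2 * t * (z + t)) * lg (2 * t * (z + t)))) * gaussPdf z = 0 := by
  have h := integral_add_right_eq_self (μ := volume)
    (fun y => y * (-2 * (pe (2 * t * y) * lg (2 * t * y))) * gaussPdf (y - t)) t
  have h2 : (∫ z, (z + t) * (-2 * (pe (2 * t * (z + t)) * lg (2 * t * (z + t)))) * gaussPdf z)
      = ∫ y, y * (-2 * (pe (2 * t * y) * lg (2 * t * y))) * gaussPdf (y - t) := by
    rw [← h]
    congr 1
    funext z
    rw [add_sub_cancel_right]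
  rw [h2]
  apply integral_eq_zero_of_odd
  intro y
  have e1 : 2 * t * (-y) = -(2 * t * y) := by ring
  rw [e1, pe_lg_neg (2 * t * y)]
  have e2 : -y - t = -(y + t) := by ring
  rw [e2, gaussPdf_even, gaussPdf_shift]
  rw [Real.exp_neg]
  have h1 : Real.exp (2 * t * y) ≠ 0 := Real.exp_ne_zero _
  field_simp

lemma Drho_eq_D1 (t : ℝ) : Dρ t = D1 t t := by
  unfold Dρ D1
  have key := odd_term_zero t
  have expand : ∀ z : ℝ, (2 * z + 4 * t) * (-2 * (pe (2 * t * (z + t)) * lg (2 * t * (z + t)))) * gaussPdf z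
      = 2 * ((z + t) * (-2 * (pe (2 * t * (z + t)) * lg (2 * t * (z + t)))) * gaussPdf z)
        + (-4 * t) * (pe (2 * t * (z + t)) * lg (2 * t * (z + t))) * gaussPdf z := by
    intro z; ring
  rw [show (fun z => (2 * z + 4 * t) * (-2 * (pe (2 * t * (z + t)) * lg (2 * t * (z + t)))) * gaussPdf z)
      = fun z => 2 * ((z + t) * (-2 * (pe (2 * t * (z + t)) * lg (2 * t * (z + t)))) * gaussPdf z)
        + (-4 * t) * (pe (2 * t * (z + t)) * lg (2 * t * (z + t))) * gaussPdf z from funext expand]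
  have i1 : Integrable (fun z => (z + t) * (-2 * (pe (2 * t * (z + t)) * lg (2 * t * (z + t)))) * gaussPdf z) := by
    have := integrable_bdd_mul_abs_gaussPdf (C := 2)
      (g := fun z => -2 * (pe (2 * t * (z + t)) * lg (2 * t * (z + t))))
      ((by fun_prop : Continuous fun z : ℝ => -2 * (pe (2 * t * (z + t)) * lg (2 * t * (z + t)))).aestronglyMeasurable)
      (fun z => by
        rw [abs_mul]
        have : |pe (2 * t * (z + t)) * lg (2 * t * (z + t))| ≤ 1 := by
          rw [abs_of_nonneg (mul_nonneg (pe_pos _).le (lg_pos _).le)]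
          exact mul_le_one₀ (pe_le_one _) (lg_pos _).le (lg_le_one _)
        calc |(-2:ℝ)| * |pe (2 * t * (z + t)) * lg (2 * t * (z + t))| ≤ |(-2:ℝ)| * 1 :=
            mul_le_mul_of_nonneg_left this (abs_nonneg _)
          _ = 2 := by norm_num)
    have i2 : Integrable (fun z => (-2 * (pe (2 * t * (z + t)) * lg (2 * t * (z + t)))) * gaussPdf z) :=
      integrable_bdd_mul_gaussPdf (C := 2)
        ((by fun_prop : Continuous fun z : ℝ => -2 * (pe (2 * t * (z + t)) * lg (2 * t * (z + t)))).aestronglyMeasurable)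
        (fun z => by
          rw [abs_mul]
          have : |pe (2 * t * (z + t)) * lg (2 * t * (z + t))| ≤ 1 := by
            rw [abs_of_nonneg (mul_nonneg (pe_pos _).le (lg_pos _).le)]
            exact mul_le_one₀ (pe_le_one _) (lg_pos _).le (lg_le_one _)
          calc |(-2:ℝ)| * |pe (2 * t * (z + t)) * lg (2 * t * (z + t))| ≤ |(-2:ℝ)| * 1 :=
              mul_le_mul_of_nonneg_left this (abs_nonneg _)
            _ = 2 := by norm_num)
    have := (this.add (i2.const_mul t))
    refine this.congr ?_
    filter_upwards with z
    simp only [Pi.add_apply]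
    try ring
  have i3 : Integrable (fun z => (-4 * t) * (pe (2 * t * (z + t)) * lg (2 * t * (z + t))) * gaussPdf z) :=
    integrable_bdd_mul_gaussPdf (C := 4 * |t|)
      ((by fun_prop : Continuous fun z : ℝ => (-4 : ℝ) * t * (pe (2 * t * (z + t)) * lg (2 * t * (z + t)))).aestronglyMeasurable)
      (fun z => by
        rw [abs_mul]
        have h1 : |pe (2 * t * (z + t)) * lg (2 * t * (z + t))| ≤ 1 := by
          rw [abs_of_nonneg (mul_nonneg (pe_pos _).le (lg_pos _).le)]
          exact mul_le_one₀ (pe_le_one _) (lg_pos _).le (lg_le_one _)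
        have h2 : |(-4 : ℝ) * t| = 4 * |t| := by rw [abs_mul]; norm_num
        calc |(-4:ℝ) * t| * |pe (2 * t * (z + t)) * lg (2 * t * (z + t))| ≤ |(-4:ℝ) * t| * 1 :=
            mul_le_mul_of_nonneg_left h1 (abs_nonneg _)
          _ = 4 * |t| := by rw [h2, mul_one])
  rw [integral_add (i1.const_mul 2) i3, integral_const_mul, key]
  ring

lemma hasDerivAt_gaussPdf (x : ℝ) : HasDerivAt gaussPdf (-x * gaussPdf x) x := by
  have h1 : HasDerivAt (fun x : ℝ => -(x ^ 2) / 2) (-x) x := by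
    have := ((hasDerivAt_pow 2 x).neg).div_const 2
    refine this.congr_deriv ?_
    simp
    ring
  have h := ((h1.exp).const_mul ((Real.sqrt (2 * Real.pi))⁻¹ : ℝ))
  rw [show -x * gaussPdf x = (Real.sqrt (2 * Real.pi))⁻¹ * (Real.exp (-(x ^ 2) / 2) * -x)
    from by unfold gaussPdf; ring]
  exact h

section Core
variable (a θ : ℝ)

noncomputable def ψf (a θ : ℝ) (z : ℝ) : ℝ := lg (2 * a * (z + θ)) * gaussPdf z
noncomputable def gf (a θ : ℝ) (z : ℝ) : ℝ := 4 * a * pe (2 * a * (z + θ))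

lemma ψf_pos (z : ℝ) : 0 < ψf a θ z := mul_pos (lg_pos _) (gaussPdf_pos _)

lemma ψf_le (z : ℝ) : ψf a θ z ≤ gaussPdf z := by
  unfold ψf
  nlinarith [lg_pos (2 * a * (z + θ)), lg_le_one (2 * a * (z + θ)), gaussPdf_pos z]

lemma gf_bdd (z : ℝ) : |gf a θ z| ≤ 4 * |a| := by
  unfold gf
  rw [abs_mul, abs_mul, show |(4:ℝ)| = 4 from by norm_num]
  have h1 : |pe (2 * a * (z + θ))| ≤ 1 := by
    rw [abs_of_nonneg (pe_pos _).le]; exact pe_le_one _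
  calc 4 * |a| * |pe (2 * a * (z + θ))| ≤ 4 * |a| * 1 :=
      mul_le_mul_of_nonneg_left h1 (by positivity)
    _ = 4 * |a| := mul_one _

@[fun_prop] lemma continuous_ψf : Continuous (ψf a θ) := by unfold ψf; fun_prop
@[fun_prop] lemma continuous_gf : Continuous (gf a θ) := by unfold gf; fun_prop

lemma integrable_ψf : Integrable (ψf a θ) :=
  integrable_bdd_mul_gaussPdf 1 ((by fun_prop : Continuous fun z : ℝ => lg (2 * a * (z + θ))).aestronglyMeasurable)
    (fun z => by rw [abs_of_nonneg (lg_pos _).le]; exact lg_le_one _)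

lemma integrable_gψ : Integrable (fun z => gf a θ z * ψf a θ z) := by
  have := integrable_bdd_mul_gaussPdf (g := fun z => gf a θ z * lg (2 * a * (z + θ))) (C := 4 * |a|)
    (((continuous_gf a θ).mul (by fun_prop)).aestronglyMeasurable)
    (fun z => by
      rw [abs_mul]
      have h2 : |lg (2 * a * (z + θ))| ≤ 1 := by
        rw [abs_of_nonneg (lg_pos _).le]; exact lg_le_one _
      calc |gf a θ z| * |lg (2 * a * (z + θ))| ≤ (4 * |a|) * 1 :=
          mul_le_mul (gf_bdd a θ z) h2 (abs_nonneg _) (by positivity)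
        _ = 4 * |a| := by ring)
  refine this.congr ?_
  filter_upwards with z
  unfold ψf
  ring

lemma integrable_zψ : Integrable (fun z => z * ψf a θ z) := by
  have := integrable_bdd_mul_abs_gaussPdf (g := fun z => lg (2 * a * (z + θ))) (C := 1)
    ((by fun_prop : Continuous fun z : ℝ => lg (2 * a * (z + θ))).aestronglyMeasurable)
    (fun z => by rw [abs_of_nonneg (lg_pos _).le]; exact lg_le_one _)
  refine this.congr ?_
  filter_upwards with z
  unfold ψf
  ring

lemma integrable_gzψ : Integrable (fun z => gf a θ z * (z * ψf a θ z)) := by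
  have := integrable_bdd_mul_abs_gaussPdf (g := fun z => gf a θ z * lg (2 * a * (z + θ))) (C := 4 * |a|)
    (((continuous_gf a θ).mul (by fun_prop)).aestronglyMeasurable)
    (fun z => by
      rw [abs_mul]
      have h2 : |lg (2 * a * (z + θ))| ≤ 1 := by
        rw [abs_of_nonneg (lg_pos _).le]; exact lg_le_one _
      calc |gf a θ z| * |lg (2 * a * (z + θ))| ≤ (4 * |a|) * 1 :=
          mul_le_mul (gf_bdd a θ z) h2 (abs_nonneg _) (by positivity)
        _ = 4 * |a| := by ring)
  refine this.congr ?_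
  filter_upwards with z
  unfold ψf
  ring

lemma hasDerivAt_ψf (z : ℝ) :
    HasDerivAt (ψf a θ) (-((gf a θ z + z) * ψf a θ z)) z := by
  have hin : HasDerivAt (fun z => 2 * a * (z + θ)) (2 * a) z := by
    simpa using ((hasDerivAt_id z).add_const θ).const_mul (2 * a)
  have hlg : HasDerivAt (fun z => lg (2 * a * (z + θ)))
      (-2 * pe (2 * a * (z + θ)) * lg (2 * a * (z + θ)) * (2 * a)) z :=
    (hasDerivAt_lg (2 * a * (z + θ))).comp (h₂ := lg) z hin
  have h := hlg.fun_mul (hasDerivAt_gaussPdf z)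
  refine h.congr_deriv ?_
  unfold ψf gf
  ring

lemma tendsto_ψf_atTop : Tendsto (ψf a θ) atTop (𝓝 0) := by
  refine squeeze_zero_norm (fun z => ?_) gaussPdf_tendsto_atTop
  rw [Real.norm_eq_abs, abs_of_nonneg (ψf_pos a θ z).le]
  exact ψf_le a θ z

lemma tendsto_ψf_atBot : Tendsto (ψf a θ) atBot (𝓝 0) := by
  refine squeeze_zero_norm (fun z => ?_) gaussPdf_tendsto_atBot
  rw [Real.norm_eq_abs, abs_of_nonneg (ψf_pos a θ z).le]
  exact ψf_le a θ z

lemma integrable_deriv_ψf : Integrable (fun z => -((gf a θ z + z) * ψf a θ z)) := by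
  have h1 := ((integrable_gψ a θ).add (integrable_zψ a θ)).neg
  refine h1.congr ?_
  filter_upwards with z
  simp only [Pi.neg_apply, Pi.add_apply]
  ring

lemma ibp1 : (∫ z, gf a θ z * ψf a θ z) + (∫ z, z * ψf a θ z) = 0 := by
  have h := my_integral_deriv_eq_zero (ψf a θ) (fun z => -((gf a θ z + z) * ψf a θ z))
    (hasDerivAt_ψf a θ) (integrable_deriv_ψf a θ) (tendsto_ψf_atTop a θ) (tendsto_ψf_atBot a θ)
  have h2 : (∫ z, -((gf a θ z + z) * ψf a θ z))
      = -((∫ z, gf a θ z * ψf a θ z) + (∫ z, z * ψf a θ z)) := by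
    rw [← integral_add (integrable_gψ a θ) (integrable_zψ a θ), ← integral_neg]
    congr 1
    funext z
    ring
  rw [h2] at h
  linarith

lemma tendsto_gψ_atTop : Tendsto (fun z => gf a θ z * ψf a θ z) atTop (𝓝 0) := by
  have hb : Tendsto (fun z => 4 * |a| * gaussPdf z) atTop (𝓝 0) := by
    have := gaussPdf_tendsto_atTop.const_mul (4 * |a|)
    simpa using this
  refine squeeze_zero_norm (fun z => ?_) hb
  rw [Real.norm_eq_abs, abs_mul]
  calc |gf a θ z| * |ψf a θ z| ≤ (4 * |a|) * |ψf a θ z| :=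
      mul_le_mul_of_nonneg_right (gf_bdd a θ z) (abs_nonneg _)
    _ ≤ 4 * |a| * gaussPdf z := by
        apply mul_le_mul_of_nonneg_left _ (by positivity)
        rw [abs_of_nonneg (ψf_pos a θ z).le]
        exact ψf_le a θ z

lemma tendsto_gψ_atBot : Tendsto (fun z => gf a θ z * ψf a θ z) atBot (𝓝 0) := by
  have hb : Tendsto (fun z => 4 * |a| * gaussPdf z) atBot (𝓝 0) := by
    have := gaussPdf_tendsto_atBot.const_mul (4 * |a|)
    simpa using this
  refine squeeze_zero_norm (fun z => ?_) hb
  rw [Real.norm_eq_abs, abs_mul]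
  calc |gf a θ z| * |ψf a θ z| ≤ (4 * |a|) * |ψf a θ z| :=
      mul_le_mul_of_nonneg_right (gf_bdd a θ z) (abs_nonneg _)
    _ ≤ 4 * |a| * gaussPdf z := by
        apply mul_le_mul_of_nonneg_left _ (by positivity)
        rw [abs_of_nonneg (ψf_pos a θ z).le]
        exact ψf_le a θ z

lemma hasDerivAt_gψ (z : ℝ) :
    HasDerivAt (fun z => gf a θ z * ψf a θ z)
      (8 * a ^ 2 * (pe (2 * a * (z + θ)) * (1 - pe (2 * a * (z + θ)))) * ψf a θ z
        - gf a θ z * ((gf a θ z + z) * ψf a θ z)) z := by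
  have hin : HasDerivAt (fun z => 2 * a * (z + θ)) (2 * a) z := by
    simpa using ((hasDerivAt_id z).add_const θ).const_mul (2 * a)
  have hpe : HasDerivAt (fun z => pe (2 * a * (z + θ)))
      (pe (2 * a * (z + θ)) * (1 - pe (2 * a * (z + θ))) * (2 * a)) z :=
    (hasDerivAt_pe (2 * a * (z + θ))).comp (h₂ := pe) z hin
  have hg : HasDerivAt (gf a θ) (4 * a * (pe (2 * a * (z + θ)) * (1 - pe (2 * a * (z + θ))) * (2 * a))) z := by
    have := hpe.const_mul (4 * a)
    exact this
  have h := hg.fun_mul (hasDerivAt_ψf a θ z)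
  refine h.congr_deriv ?_
  unfold gf
  ring

lemma integrable_deriv_gψ : Integrable (fun z =>
    8 * a ^ 2 * (pe (2 * a * (z + θ)) * (1 - pe (2 * a * (z + θ)))) * ψf a θ z
      - gf a θ z * ((gf a θ z + z) * ψf a θ z)) := by
  have i1 : Integrable (fun z => (8 * a ^ 2 * (pe (2 * a * (z + θ)) * (1 - pe (2 * a * (z + θ))))
      - gf a θ z * gf a θ z) * (lg (2 * a * (z + θ)) * gaussPdf z)) := by
    have hgsq : ∀ z : ℝ, |8 * a ^ 2 * (pe (2 * a * (z + θ)) * (1 - pe (2 * a * (z + θ))))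
        - gf a θ z * gf a θ z| ≤ 24 * a ^ 2 := by
      intro z
      set u := pe (2 * a * (z + θ)) with hu
      have hu0 : 0 < u := pe_pos _
      have hu1 : u ≤ 1 := pe_le_one _
      have : gf a θ z = 4 * a * u := rfl
      rw [this, abs_le]
      constructor <;> nlinarith [sq_nonneg a, sq_nonneg (a * u), mul_nonneg (sq_nonneg a) (mul_nonneg hu0.le (by linarith : (0:ℝ) ≤ 1 - u))]
    have := integrable_bdd_mul_gaussPdf
      (g := fun z => (8 * a ^ 2 * (pe (2 * a * (z + θ)) * (1 - pe (2 * a * (z + θ))))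
        - gf a θ z * gf a θ z) * lg (2 * a * (z + θ))) (C := 24 * a ^ 2)
      ((by fun_prop : Continuous fun z : ℝ => (8 * a ^ 2 * (pe (2 * a * (z + θ)) * (1 - pe (2 * a * (z + θ))))
        - gf a θ z * gf a θ z) * lg (2 * a * (z + θ))).aestronglyMeasurable)
      (fun z => by
        rw [abs_mul]
        have h2 : |lg (2 * a * (z + θ))| ≤ 1 := by
          rw [abs_of_nonneg (lg_pos _).le]; exact lg_le_one _
        calc _ ≤ (24 * a ^ 2) * 1 := mul_le_mul (hgsq z) h2 (abs_nonneg _) (by positivity)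
          _ = 24 * a ^ 2 := by ring)
    refine this.congr ?_
    filter_upwards with z
    ring
  have i2 : Integrable (fun z => gf a θ z * (z * ψf a θ z)) := integrable_gzψ a θ
  have := i1.sub i2
  refine this.congr ?_
  filter_upwards with z
  simp only [Pi.sub_apply]
  unfold ψf
  ring

lemma ibp2 : D2 a θ = -(∫ z, gf a θ z * (z * ψf a θ z)) := by
  have h := my_integral_deriv_eq_zero (fun z => gf a θ z * ψf a θ z)
    (fun z => 8 * a ^ 2 * (pe (2 * a * (z + θ)) * (1 - pe (2 * a * (z + θ)))) * ψf a θ z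
      - gf a θ z * ((gf a θ z + z) * ψf a θ z))
    (hasDerivAt_gψ a θ) (integrable_deriv_gψ a θ) (tendsto_gψ_atTop a θ) (tendsto_gψ_atBot a θ)
  have expand : ∀ z : ℝ, 8 * a ^ 2 * (pe (2 * a * (z + θ)) * (1 - pe (2 * a * (z + θ)))) * ψf a θ z
      - gf a θ z * ((gf a θ z + z) * ψf a θ z)
      = -((16 * a ^ 2 * pe (2 * a * (z + θ)) ^ 2
          - 8 * a ^ 2 * (pe (2 * a * (z + θ)) * (1 - pe (2 * a * (z + θ)))))
          * lg (2 * a * (z + θ)) * gaussPdf z)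
        - gf a θ z * (z * ψf a θ z) := by
    intro z
    have : gf a θ z = 4 * a * pe (2 * a * (z + θ)) := rfl
    rw [this]
    unfold ψf
    ring
  have i1 : Integrable (fun z => (16 * a ^ 2 * pe (2 * a * (z + θ)) ^ 2
      - 8 * a ^ 2 * (pe (2 * a * (z + θ)) * (1 - pe (2 * a * (z + θ)))))
      * lg (2 * a * (z + θ)) * gaussPdf z) := by
    have hgsq : ∀ z : ℝ, |(16 * a ^ 2 * pe (2 * a * (z + θ)) ^ 2
        - 8 * a ^ 2 * (pe (2 * a * (z + θ)) * (1 - pe (2 * a * (z + θ))))) * lg (2 * a * (z + θ))|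
        ≤ 24 * a ^ 2 := by
      intro z
      set u := pe (2 * a * (z + θ)) with hu
      have hu0 : 0 < u := pe_pos _
      have hu1 : u ≤ 1 := pe_le_one _
      rw [abs_mul]
      have h2 : |lg (2 * a * (z + θ))| ≤ 1 := by
        rw [abs_of_nonneg (lg_pos _).le]; exact lg_le_one _
      have h1 : |16 * a ^ 2 * u ^ 2 - 8 * a ^ 2 * (u * (1 - u))| ≤ 24 * a ^ 2 := by
        have hA : 0 ≤ a ^ 2 * (u * (1 - u)) :=
          mul_nonneg (sq_nonneg a) (mul_nonneg hu0.le (by linarith))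
        have hB : a ^ 2 * u ^ 2 ≤ a ^ 2 := by nlinarith [sq_nonneg a, sq_nonneg (a * u)]
        have hC : a ^ 2 * (u * (1 - u)) ≤ a ^ 2 := by nlinarith [sq_nonneg a, sq_nonneg (a * u)]
        have hD : 0 ≤ a ^ 2 * u ^ 2 := by positivity
        rw [abs_le]
        constructor <;> nlinarith
      calc _ ≤ (24 * a ^ 2) * 1 := mul_le_mul h1 h2 (abs_nonneg _) (by positivity)
        _ = 24 * a ^ 2 := by ring
    exact integrable_bdd_mul_gaussPdf (C := 24 * a ^ 2)
      ((by fun_prop : Continuous fun z : ℝ => (16 * a ^ 2 * pe (2 * a * (z + θ)) ^ 2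
        - 8 * a ^ 2 * (pe (2 * a * (z + θ)) * (1 - pe (2 * a * (z + θ)))))
        * lg (2 * a * (z + θ))).aestronglyMeasurable) hgsq
  rw [show (fun z => 8 * a ^ 2 * (pe (2 * a * (z + θ)) * (1 - pe (2 * a * (z + θ)))) * ψf a θ z
      - gf a θ z * ((gf a θ z + z) * ψf a θ z))
      = fun z => -((16 * a ^ 2 * pe (2 * a * (z + θ)) ^ 2
          - 8 * a ^ 2 * (pe (2 * a * (z + θ)) * (1 - pe (2 * a * (z + θ)))))
          * lg (2 * a * (z + θ)) * gaussPdf z)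
        - gf a θ z * (z * ψf a θ z) from funext expand] at h
  have e1 : (∫ z, -((16 * a ^ 2 * pe (2 * a * (z + θ)) ^ 2
          - 8 * a ^ 2 * (pe (2 * a * (z + θ)) * (1 - pe (2 * a * (z + θ)))))
          * lg (2 * a * (z + θ)) * gaussPdf z)
        - gf a θ z * (z * ψf a θ z))
      = -(∫ z, (16 * a ^ 2 * pe (2 * a * (z + θ)) ^ 2
          - 8 * a ^ 2 * (pe (2 * a * (z + θ)) * (1 - pe (2 * a * (z + θ)))))
          * lg (2 * a * (z + θ)) * gaussPdf z)
        - ∫ z, gf a θ z * (z * ψf a θ z) := by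
    have i1n : Integrable (fun z => -((16 * a ^ 2 * pe (2 * a * (z + θ)) ^ 2
        - 8 * a ^ 2 * (pe (2 * a * (z + θ)) * (1 - pe (2 * a * (z + θ)))))
        * lg (2 * a * (z + θ)) * gaussPdf z)) volume := i1.neg
    rw [integral_sub i1n (integrable_gzψ a θ), integral_neg]
  rw [e1] at h
  unfold D2
  linarith

lemma D1_eq : D1 a θ = -(∫ z, gf a θ z * ψf a θ z) := by
  unfold D1
  rw [← integral_neg]
  congr 1
  funext z
  unfold gf ψf
  ring

lemma logconcave_core (ha : 0 ≤ a) : D2 a θ * P1 a θ ≤ (D1 a θ) ^ 2 := by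
  have hg_mono : Monotone (gf a θ) := by
    intro x y hxy
    unfold gf
    have h1 : 2 * a * (x + θ) ≤ 2 * a * (y + θ) := by nlinarith
    have := pe_monotone h1
    nlinarith [this]
  have cheb := chebyshev_assoc (ψf a θ) (gf a θ) (fun z => (ψf_pos a θ z).le) hg_mono
    (integrable_ψf a θ) (integrable_gψ a θ) (integrable_zψ a θ) (integrable_gzψ a θ)
  have h1 := ibp1 a θ
  have h2 := ibp2 a θ
  have h3 := D1_eq a θ
  have hP : P1 a θ = ∫ z, ψf a θ z := rfl
  have hS : (∫ z, z * ψf a θ z) = -(∫ z, gf a θ z * ψf a θ z) := by linarith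
  rw [h2, h3, hP]
  rw [hS] at cheb
  nlinarith [cheb]

lemma P1_pos : 0 < P1 a θ := by
  rw [show P1 a θ = ∫ z, ψf a θ z from rfl,
    integral_pos_iff_support_of_nonneg (fun z => (ψf_pos a θ z).le) (integrable_ψf a θ)]
  have : Function.support (ψf a θ) = Set.univ := by
    ext z
    simp [Function.support, (ψf_pos a θ z).ne']
  rw [this]
  simp [Real.volume_univ]

end Core

-- one-sided derivative sign lemmas
lemma deriv_nonneg_of_local_left {f : ℝ → ℝ} {x d : ℝ} (hd : HasDerivAt f d x)
    (h : ∀ᶠ t in 𝓝[<] x, f t ≤ f x) : 0 ≤ d := by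
  have hsub : Iio x ⊆ {x}ᶜ := fun t ht => ne_of_lt ht
  have ht : Tendsto (slope f x) (𝓝[<] x) (𝓝 d) :=
    (hasDerivAt_iff_tendsto_slope.1 hd).mono_left (nhdsWithin_mono x hsub)
  refine ge_of_tendsto ht ?_
  filter_upwards [h, self_mem_nhdsWithin] with t htle htlt
  have hlt : t < x := htlt
  rw [slope_def_field]
  exact div_nonneg_iff.2 (Or.inr ⟨by linarith, by linarith⟩)

lemma deriv_nonpos_of_local_right {f : ℝ → ℝ} {x d : ℝ} (hd : HasDerivAt f d x)
    (h : ∀ᶠ t in 𝓝[>] x, f t ≤ f x) : d ≤ 0 := by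
  have hsub : Ioi x ⊆ {x}ᶜ := fun t ht => (ne_of_gt ht)
  have ht : Tendsto (slope f x) (𝓝[>] x) (𝓝 d) :=
    (hasDerivAt_iff_tendsto_slope.1 hd).mono_left (nhdsWithin_mono x hsub)
  refine le_of_tendsto ht ?_
  filter_upwards [h, self_mem_nhdsWithin] with t htle htlt
  have hlt : x < t := htlt
  rw [slope_def_field]
  exact div_nonpos_iff.2 (Or.inr ⟨by linarith, by linarith⟩)

lemma hasDerivAt_rho' (t : ℝ) : HasDerivAt ρ (D1 t t) t := by
  rw [← Drho_eq_D1]; exact hasDerivAt_rho t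

lemma rho_eq_P1 (t : ℝ) : ρ t = P1 t t := rhostar_eq_P1 t t

lemma rho_pos (t : ℝ) : 0 < ρ t := by rw [rho_eq_P1]; exact P1_pos t t

lemma D1_zero_zero : D1 0 0 = 0 := by
  unfold D1
  have : ∀ z : ℝ, (-4 * (0:ℝ)) * (pe (2 * 0 * (z + 0)) * lg (2 * 0 * (z + 0))) * gaussPdf z = 0 := by
    intro z; ring
  rw [show (fun z => (-4 * (0:ℝ)) * (pe (2 * 0 * (z + 0)) * lg (2 * 0 * (z + 0))) * gaussPdf z)
    = fun _ => (0:ℝ) from funext this]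
  simp

/-- a* is a global maximizer of θ ↦ (θ + k/σ)²ρ*(θ) on [−k/σ, ∞), with maximal value
(a* + k/σ)²ρ(a*), and ρ*(a*) = ρ(a*). -/
theorem stmt_13 (σ k τstar astar : ℝ) (hσ : 0 < σ) (hk : 0 < k)
    (hτ0 : 0 ≤ τstar)
    (hτmax : ∀ τ : ℝ, 0 ≤ τ → τ ^ 2 * ρ τ ≤ τstar ^ 2 * ρ τstar)
    (ha : astar ∈ Set.Icc 0 τstar)
    (hamax : ∀ a ∈ Set.Icc 0 τstar,
      (a + k / σ) ^ 2 * ρ a ≤ (astar + k / σ) ^ 2 * ρ astar) :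
    (∀ a : ℝ, -(k / σ) ≤ a →
      (a + k / σ) ^ 2 * ρstar astar a ≤ (astar + k / σ) ^ 2 * ρ astar) ∧
    ρstar astar astar = ρ astar := by
  set c := k / σ with hc_def
  have hc : 0 < c := div_pos hk hσ
  obtain ⟨ha0, haτ⟩ := ha
  -- τstar > 0
  have hτpos : 0 < τstar := by
    rcases lt_or_eq_of_le hτ0 with h | h
    · exact h
    · exfalso
      have h1 := hτmax 1 (by norm_num)
      rw [← h] at h1
      simp at h1
      nlinarith [rho_pos 1]
  -- derivative of G
  have hG : ∀ t : ℝ, HasDerivAt (fun t => (t + c) ^ 2 * ρ t)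
      (2 * (t + c) * ρ t + (t + c) ^ 2 * D1 t t) t := by
    intro t
    have h1 : HasDerivAt (fun t : ℝ => (t + c) ^ 2) (2 * (t + c)) t := by
      have := ((hasDerivAt_id t).add_const c).fun_pow 2
      simpa using this
    have := h1.fun_mul (hasDerivAt_rho' t)
    convert this using 1
    try ring
  -- derivative of H
  have hH : ∀ t : ℝ, HasDerivAt (fun t => t ^ 2 * ρ t)
      (2 * t * ρ t + t ^ 2 * D1 t t) t := by
    intro t
    have h1 : HasDerivAt (fun t : ℝ => t ^ 2) (2 * t) t := by
      simpa using hasDerivAt_pow 2 t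
    have := h1.fun_mul (hasDerivAt_rho' t)
    convert this using 1
    try ring
  -- H'(τstar) = 0
  have hHmax : IsLocalMax (fun t => t ^ 2 * ρ t) τstar := by
    have hnb : Ioi (0:ℝ) ∈ 𝓝 τstar := Ioi_mem_nhds hτpos
    filter_upwards [hnb] with t ht
    exact hτmax t (le_of_lt ht)
  have hH0 : 2 * τstar * ρ τstar + τstar ^ 2 * D1 τstar τstar = 0 :=
    hHmax.hasDerivAt_eq_zero (hH τstar)
  have hD1τ : τstar * D1 τstar τstar = -2 * ρ τstar := by
    have hτne : τstar ≠ 0 := ne_of_gt hτpos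
    have : τstar * (τstar * D1 τstar τstar + 2 * ρ τstar) = 0 := by ring_nf; ring_nf at hH0; linarith
    rcases mul_eq_zero.1 this with h | h
    · exact absurd h hτne
    · linarith
  -- astar < τstar
  have haltτ : astar < τstar := by
    rcases lt_or_eq_of_le haτ with h | h
    · exact h
    · exfalso
      subst h
      -- left max at astar(=τstar), derivative must be ≥ 0, but it is < 0
      have hev : ∀ᶠ t in 𝓝[<] astar, (t + c) ^ 2 * ρ t ≤ (astar + c) ^ 2 * ρ astar := by
        have hmem : Ioo (0:ℝ) astar ∈ 𝓝[<] astar :=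
          Ioo_mem_nhdsLT hτpos
        filter_upwards [hmem] with t ht
        exact hamax t ⟨le_of_lt ht.1, le_of_lt ht.2⟩
      have hge : 0 ≤ 2 * (astar + c) * ρ astar + (astar + c) ^ 2 * D1 astar astar :=
        deriv_nonneg_of_local_left (hG astar) hev
      -- compute sign: multiply by τstar
      have hlt : astar * (2 * (astar + c) * ρ astar + (astar + c) ^ 2 * D1 astar astar) < 0 := by
        have e1 : astar * (2 * (astar + c) * ρ astar + (astar + c) ^ 2 * D1 astar astar)
            = 2 * (astar + c) * ρ astar * astar + (astar + c) ^ 2 * (astar * D1 astar astar) := by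
          ring
        rw [e1, hD1τ]
        have h2 : 2 * (astar + c) * ρ astar * astar + (astar + c) ^ 2 * (-2 * ρ astar)
            = -2 * c * (astar + c) * ρ astar := by ring
        rw [h2]
        have : 0 < astar + c := by linarith
        nlinarith [mul_pos (mul_pos hc this) (rho_pos astar)]
      nlinarith [mul_nonneg (le_of_lt hτpos) hge]
  -- astar > 0
  have hapos : 0 < astar := by
    rcases lt_or_eq_of_le ha0 with h | h
    · exact h
    · exfalso
      have h' : astar = 0 := h.symm
      subst h'
      have hev : ∀ᶠ t in 𝓝[>] (0:ℝ), (t + c) ^ 2 * ρ t ≤ (0 + c) ^ 2 * ρ 0 := by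
        have hmem : Ioo (0:ℝ) τstar ∈ 𝓝[>] (0:ℝ) :=
          Ioo_mem_nhdsGT hτpos
        filter_upwards [hmem] with t ht
        exact hamax t ⟨le_of_lt ht.1, le_of_lt ht.2⟩
      have hle : 2 * (0 + c) * ρ 0 + (0 + c) ^ 2 * D1 0 0 ≤ 0 :=
        deriv_nonpos_of_local_right (hG 0) hev
      rw [D1_zero_zero] at hle
      nlinarith [rho_pos 0, hc]
  -- interior: G'(astar) = 0
  have hGmax : IsLocalMax (fun t => (t + c) ^ 2 * ρ t) astar := by
    have hnb : Ioo (0:ℝ) τstar ∈ 𝓝 astar := Ioo_mem_nhds hapos haltτ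
    filter_upwards [hnb] with t ht
    exact hamax t ⟨le_of_lt ht.1, le_of_lt ht.2⟩
  have hG0 : 2 * (astar + c) * ρ astar + (astar + c) ^ 2 * D1 astar astar = 0 :=
    hGmax.hasDerivAt_eq_zero (hG astar)
  -- Now the function F θ = (θ+c)^2 * P1 astar θ
  set a := astar with ha_def
  have hac : 0 < a + c := by linarith
  -- L function
  set L : ℝ → ℝ := fun θ => 2 / (θ + c) + D1 a θ / P1 a θ with hL_def
  have hLderiv : ∀ θ : ℝ, θ ≠ -c → HasDerivAt L
      (-2 / (θ + c) ^ 2 + (D2 a θ * P1 a θ - D1 a θ ^ 2) / (P1 a θ) ^ 2) θ := by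
    intro θ hθ
    have hne : θ + c ≠ 0 := fun h => hθ (by linarith [h] )
    have h1 : HasDerivAt (fun θ : ℝ => 2 / (θ + c)) (-2 / (θ + c) ^ 2) θ := by
      have hid : HasDerivAt (fun θ : ℝ => θ + c) 1 θ := (hasDerivAt_id θ).add_const c
      have h2 := (hid.inv hne).const_mul (2:ℝ)
      have heq : (fun θ : ℝ => 2 / (θ + c)) = fun θ : ℝ => 2 * (θ + c)⁻¹ := by
        funext x; rw [div_eq_mul_inv]
      rw [heq, show (-2 / (θ + c) ^ 2 : ℝ) = 2 * (-1 / (θ + c) ^ 2) by ring]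
      exact h2
    have h2 : HasDerivAt (fun θ => D1 a θ / P1 a θ)
        ((D2 a θ * P1 a θ - D1 a θ * D1 a θ) / (P1 a θ) ^ 2) θ :=
      (hasDerivAt_D1 a θ).div (hasDerivAt_P1 a θ) (ne_of_gt (P1_pos a θ))
    have := h1.add h2
    refine this.congr_deriv ?_
    rw [pow_two (D1 a θ)]
  have hL_neg_deriv : ∀ θ ∈ Ioi (-c), deriv L θ < 0 := by
    intro θ hθ
    have hθne : θ ≠ -c := ne_of_gt hθ
    have hd := hLderiv θ hθne
    rw [hd.deriv]
    have hne : (0:ℝ) < θ + c := by have h := mem_Ioi.mp hθ; linarith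
    have h1 : (0:ℝ) < 2 / (θ + c) ^ 2 := by positivity
    have h2 : (D2 a θ * P1 a θ - D1 a θ ^ 2) / (P1 a θ) ^ 2 ≤ 0 := by
      apply div_nonpos_of_nonpos_of_nonneg
      · have := logconcave_core a θ (le_of_lt hapos)
        linarith
      · positivity
    have h3 : (0:ℝ) < (θ + c) ^ 2 := by positivity
    have h4 : -2 / (θ + c) ^ 2 < 0 := div_neg_of_neg_of_pos (by norm_num) h3
    linarith [h2, h4]
  -- F and its derivative
  have hFderiv : ∀ θ : ℝ, HasDerivAt (fun θ => (θ + c) ^ 2 * P1 a θ)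
      (2 * (θ + c) * P1 a θ + (θ + c) ^ 2 * D1 a θ) θ := by
    intro θ
    have h1 : HasDerivAt (fun θ : ℝ => (θ + c) ^ 2) (2 * (θ + c)) θ := by
      simpa using ((hasDerivAt_id θ).add_const c).fun_pow 2
    have := h1.fun_mul (hasDerivAt_P1 a θ)
    convert this using 1
    try ring
  have hP1aa : P1 a a = ρ a := (rho_eq_P1 a).symm
  have hLa : L a = 0 := by
    have hP : 0 < P1 a a := P1_pos a a
    have h5 : (a + c) * (2 * P1 a a + (a + c) * D1 a a) = 0 := by
      rw [hP1aa]; ring_nf; ring_nf at hG0; linarith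
    have h6 : 2 * P1 a a + (a + c) * D1 a a = 0 := by
      rcases mul_eq_zero.1 h5 with h | h
      · exact absurd h (ne_of_gt hac)
      · exact h
    rw [hL_def]
    have hacne : a + c ≠ 0 := ne_of_gt hac
    have hPne : P1 a a ≠ 0 := ne_of_gt hP
    field_simp
    linarith [h6]
  have hLcont : ContinuousOn L (Ioi (-c)) := fun θ hθ =>
    ((hLderiv θ (ne_of_gt hθ)).continuousAt).continuousWithinAt
  have hLanti : StrictAntiOn L (Ioi (-c)) := by
    apply strictAntiOn_of_deriv_neg (convex_Ioi _) hLcont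
    intro θ hθ
    rw [interior_Ioi] at hθ
    exact hL_neg_deriv θ hθ
  have haIoi : a ∈ Ioi (-c) := by rw [mem_Ioi]; linarith
  set F : ℝ → ℝ := fun θ => (θ + c) ^ 2 * P1 a θ with hF_def
  have hKeq : ∀ x : ℝ, -c < x → 2 * (x + c) * P1 a x + (x + c) ^ 2 * D1 a x
      = (x + c) ^ 2 * P1 a x * L x := by
    intro x hx
    have hxc : (0:ℝ) < x + c := by linarith
    have hPx : 0 < P1 a x := P1_pos a x
    rw [hL_def]
    field_simp
  have key : ∀ θ : ℝ, -c ≤ θ → F θ ≤ F a := by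
    intro θ hθ
    have hFa_pos : 0 < F a := by
      rw [hF_def]
      exact mul_pos (pow_pos hac 2) (P1_pos a a)
    rcases eq_or_lt_of_le hθ with heq | hlt
    · have hFθ : F θ = 0 := by
        rw [hF_def, ← heq]
        simp
      rw [hFθ]
      exact le_of_lt hFa_pos
    · rcases le_total θ a with hle | hge
      · have hmono : MonotoneOn F (Icc θ a) := by
          apply monotoneOn_of_deriv_nonneg (convex_Icc _ _)
          · exact fun x _ => ((hFderiv x).continuousAt).continuousWithinAt
          · exact fun x _ => ((hFderiv x).differentiableAt).differentiableWithinAt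
          · intro x hx
            rw [interior_Icc] at hx
            have hx1 : -c < x := lt_trans hlt hx.1
            have hxa : x < a := hx.2
            have hLx : 0 < L x := by
              have := hLanti (mem_Ioi.mpr hx1) haIoi hxa
              rw [hLa] at this
              exact this
            rw [(hFderiv x).deriv, hKeq x hx1]
            have hxc : (0:ℝ) < x + c := by linarith
            exact (mul_pos (mul_pos (pow_pos hxc 2) (P1_pos a x)) hLx).le
        exact hmono (mem_Icc.mpr ⟨le_refl θ, hle⟩) (mem_Icc.mpr ⟨hle, le_refl a⟩) hle
      · have hanti : AntitoneOn F (Icc a θ) := by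
          apply antitoneOn_of_deriv_nonpos (convex_Icc _ _)
          · exact fun x _ => ((hFderiv x).continuousAt).continuousWithinAt
          · exact fun x _ => ((hFderiv x).differentiableAt).differentiableWithinAt
          · intro x hx
            rw [interior_Icc] at hx
            have hx1 : -c < x := by linarith [hx.1]
            have hxa : a < x := hx.1
            have hLx : L x < 0 := by
              have := hLanti haIoi (mem_Ioi.mpr hx1) hxa
              rw [hLa] at this
              exact this
            rw [(hFderiv x).deriv, hKeq x hx1]
            have hxc : (0:ℝ) < x + c := by linarith
            have := mul_pos (pow_pos hxc 2) (P1_pos a x)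
            exact (mul_neg_of_pos_of_neg this hLx).le
        exact hanti (mem_Icc.mpr ⟨le_refl a, hge⟩) (mem_Icc.mpr ⟨hge, le_refl θ⟩) hge
  constructor
  · intro x hx
    have hkey := key x hx
    have e1 : ρstar a x = P1 a x := rhostar_eq_P1 a x
    have e2 : F a = (a + c) ^ 2 * ρ a := by
      show (a + c) ^ 2 * P1 a a = (a + c) ^ 2 * ρ a
      rw [hP1aa]
    rw [e1]
    show F x ≤ (a + c) ^ 2 * ρ a
    rw [← e2]
    exact hkey
  · rfl
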